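/- Let f₁,…,f_M : ℝ^d → ℝ and 0 ≤ O < M. Define φ(θ) as the (O+1)-st largest value among f₁(θ),…,f_M(θ), and for each subset S ⊆ {1,…,M} of size M − O define φ_S(θ) = max_{m ∈ S} f_m(θ). Then inf φ = min over all such subsets S of inf φ_S. -/

import Mathlib

/-- The (O+1)-st largest component of `z`: sort ascending with `Tuple.sort` and
take the entry at position `M - 1 - O`. -/
noncomputable def pctl {M : ℕ} (O : ℕ) (hO : O < M) (z : Fin M → ℝ) : ℝ :=
  z (Tuple.sort z ⟨M - 1 - O, by omega⟩)

lemma pctl_eq_iInf {M O : ℕ} (hO : O < M) (z : Fin M → ℝ) :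
    ((pctl O hO z : ℝ) : EReal) =
      ⨅ S : {S : Finset (Fin M) // S.card = M - O},
        ((S.1.sup' (Finset.card_pos.mp (by rw [S.2]; exact Nat.sub_pos_of_lt hO)) z : ℝ) : EReal) := by
  set σ := Tuple.sort z
  have hmono : Monotone (z ∘ σ) := Tuple.monotone_sort z
  apply le_antisymm
  · apply le_iInf
    rintro ⟨S, hS⟩
    -- find m ∈ S with pctl ≤ z m
    set T : Finset (Fin M) := (Finset.univ.filter (fun i : Fin M => M - 1 - O ≤ (i:ℕ))).image σ
    have hTcard : T.card = O + 1 := by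
      rw [Finset.card_image_of_injective _ σ.injective]
      have he : (Finset.univ.filter (fun i : Fin M => M - 1 - O ≤ (i:ℕ)))
          = Finset.Ici (⟨M - 1 - O, by omega⟩ : Fin M) := by
        ext i; simp [Finset.mem_Ici, Fin.le_def]
      rw [he, Fin.card_Ici]
      simp only []
      show M - (M - 1 - O) = O + 1
      omega
    have hST : (S ∩ T).Nonempty := by
      by_contra h
      have hd : Disjoint S T := Finset.disjoint_iff_inter_eq_empty.mpr
        (Finset.not_nonempty_iff_eq_empty.mp h)
      have := Finset.card_union_of_disjoint hd
      have hle := Finset.card_le_univ (S ∪ T)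
      simp [this, hS, hTcard, Finset.card_univ] at hle
      omega
    obtain ⟨m, hm⟩ := hST
    have hmS : m ∈ S := (Finset.mem_inter.mp hm).1
    have hmT : m ∈ T := (Finset.mem_inter.mp hm).2
    obtain ⟨i, hi, rfl⟩ := Finset.mem_image.mp hmT
    have hi' : M - 1 - O ≤ (i:ℕ) := (Finset.mem_filter.mp hi).2
    have : pctl O hO z ≤ z (σ i) := hmono (by exact hi')
    calc ((pctl O hO z : ℝ) : EReal) ≤ ((z (σ i) : ℝ) : EReal) := by exact_mod_cast this
      _ ≤ _ := by exact_mod_cast Finset.le_sup' z hmS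
  · -- choose S₀
    set S₀ : Finset (Fin M) := (Finset.univ.filter (fun i : Fin M => (i:ℕ) ≤ M - 1 - O)).image σ
    have hS₀card : S₀.card = M - O := by
      rw [Finset.card_image_of_injective _ σ.injective]
      have he : (Finset.univ.filter (fun i : Fin M => (i:ℕ) ≤ M - 1 - O))
          = Finset.Iic (⟨M - 1 - O, by omega⟩ : Fin M) := by
        ext i; simp [Finset.mem_Iic, Fin.le_def]
      rw [he, Fin.card_Iic]
      show (M - 1 - O) + 1 = M - O
      omega
    refine iInf_le_of_le ⟨S₀, hS₀card⟩ ?_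
    have hne := Finset.card_pos.mp (by rw [hS₀card]; omega : 0 < S₀.card)
    have hsup : S₀.sup' hne z ≤ pctl O hO z := by
      apply Finset.sup'_le
      intro m hm
      obtain ⟨i, hi, rfl⟩ := Finset.mem_image.mp hm
      exact hmono ((Finset.mem_filter.mp hi).2 : (i:ℕ) ≤ M - 1 - O)
    exact_mod_cast hsup


/-- inf of the percentile objective equals the minimum over all
subsets S of size M - O of the infimum of the S-fit objective. -/
theorem stmt_3 (d M O : ℕ) (hO : O < M) (fs : Fin M → (Fin d → ℝ) → ℝ) :
    (⨅ θ : Fin d → ℝ, ((pctl O hO (fun m => fs m θ) : ℝ) : EReal)) =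
      ⨅ S : {S : Finset (Fin M) // S.card = M - O},
        ⨅ θ : Fin d → ℝ,
          ((S.1.sup' (Finset.card_pos.mp (by rw [S.2]; omega)) (fun m => fs m θ) : ℝ) : EReal) := by
  rw [iInf_comm]
  exact iInf_congr fun θ => pctl_eq_iInf hO _
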